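/- Let q = p^m be a power of a prime p and let C be a Hermitian self-orthogonal linear code of length 2n and F_{q²}-dimension n−1 over F_{q²}. Then there exists a Hermitian self-dual code C' of length 2n (thus of dimension n) with C ⊆ C' ⊆ C^{⊥H}. -/

import Mathlib

open Matrix BigOperators Finset

/-- The Hermitian inner product `x * y = ∑ i, x i * (y i)^q` over `F_{q²}`. -/
def hermInner (q : ℕ) {F : Type} [CommRing F] {ι : Type} [Fintype ι]
    (x y : ι → F) : F :=
  ∑ i, x i * y i ^ q

/-- The Hermitian dual of a set of vectors. -/
def hermDual (q : ℕ) {F : Type} [CommRing F] {ι : Type} [Fintype ι]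
    (C : Set (ι → F)) : Set (ι → F) :=
  {y | ∀ x ∈ C, hermInner q x y = 0}

/-- The code generated by a matrix: the span of its rows. -/
def rowSpan {F : Type} [Field F] {k : ℕ} {ι : Type} (G : Matrix (Fin k) ι F) :
    Submodule F (ι → F) :=
  Submodule.span F (Set.range fun i => G i)

section HermAux

open Module

variable {F : Type} [Field F] {ι : Type} [Fintype ι] [DecidableEq ι] {q : ℕ}

lemma sum_pow_q (hq1 : 0 < q) (hadd : ∀ x y : F, (x + y) ^ q = x ^ q + y ^ q)
    {α : Type} (s : Finset α) (f : α → F) :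
    (∑ i ∈ s, f i) ^ q = ∑ i ∈ s, f i ^ q := by
  classical
  induction s using Finset.induction_on with
  | empty => simp [zero_pow hq1.ne']
  | @insert a s h ih => rw [Finset.sum_insert h, Finset.sum_insert h, hadd, ih]

lemma hermInner_add_left (x x' y : ι → F) :
    hermInner q (x + x') y = hermInner q x y + hermInner q x' y := by
  simp [hermInner, add_mul, Finset.sum_add_distrib]

lemma hermInner_smul_left (a : F) (x y : ι → F) :
    hermInner q (a • x) y = a * hermInner q x y := by
  simp [hermInner, Finset.mul_sum, mul_assoc]

lemma hermInner_add_right (hq1 : 0 < q) (hadd : ∀ x y : F, (x + y) ^ q = x ^ q + y ^ q)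
    (x y y' : ι → F) :
    hermInner q x (y + y') = hermInner q x y + hermInner q x y' := by
  simp only [hermInner, Pi.add_apply, hadd, mul_add, Finset.sum_add_distrib]

lemma hermInner_smul_right (a : F) (x y : ι → F) :
    hermInner q x (a • y) = a ^ q * hermInner q x y := by
  simp [hermInner, Finset.mul_sum, mul_pow, mul_left_comm]

lemma hermInner_zero_right (hq1 : 0 < q) (x : ι → F) : hermInner q x 0 = 0 := by
  simp [hermInner, zero_pow hq1.ne']

lemma pow_q_neg (hq1 : 0 < q) (hadd : ∀ x y : F, (x + y) ^ q = x ^ q + y ^ q)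
    (t : F) : (-t) ^ q = -(t ^ q) := by
  have h := hadd t (-t)
  rw [add_neg_cancel, zero_pow hq1.ne'] at h
  exact (eq_neg_of_add_eq_zero_right h.symm)

lemma hermInner_sub_right (hq1 : 0 < q) (hadd : ∀ x y : F, (x + y) ^ q = x ^ q + y ^ q)
    (x y z : ι → F) :
    hermInner q x (y - z) = hermInner q x y - hermInner q x z := by
  have hneg : hermInner q x (-z) = -hermInner q x z := by
    have h := hermInner_smul_right (q := q) (-1 : F) x z
    rw [neg_one_smul] at h
    rw [h, pow_q_neg hq1 hadd 1, one_pow]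
    ring
  rw [sub_eq_add_neg, hermInner_add_right hq1 hadd, hneg, sub_eq_add_neg]

lemma hermInner_conj (hq1 : 0 < q) (hadd : ∀ x y : F, (x + y) ^ q = x ^ q + y ^ q)
    (hqq : ∀ x : F, (x ^ q) ^ q = x) (x y : ι → F) :
    (hermInner q x y) ^ q = hermInner q y x := by
  rw [hermInner, hermInner, sum_pow_q hq1 hadd]
  exact Finset.sum_congr rfl fun i _ => by rw [mul_pow, hqq, mul_comm]

lemma hermInner_eq_zero_comm (hq1 : 0 < q) (hadd : ∀ x y : F, (x + y) ^ q = x ^ q + y ^ q)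
    (hqq : ∀ x : F, (x ^ q) ^ q = x) (x y : ι → F) :
    hermInner q x y = 0 ↔ hermInner q y x = 0 := by
  constructor <;> intro h
  · rw [← hermInner_conj hq1 hadd hqq x y, h, zero_pow hq1.ne']
  · rw [← hermInner_conj hq1 hadd hqq y x, h, zero_pow hq1.ne']

/-- The Hermitian dual of a submodule, as a submodule. -/
def hermDualSub (hq1 : 0 < q) (hadd : ∀ x y : F, (x + y) ^ q = x ^ q + y ^ q)
    (W : Submodule F (ι → F)) : Submodule F (ι → F) where
  carrier := hermDual q (W : Set (ι → F))
  add_mem' := fun {y} {y'} hy hy' x hx => by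
    rw [hermInner_add_right hq1 hadd, hy x hx, hy' x hx, add_zero]
  zero_mem' := fun x _ => hermInner_zero_right hq1 x
  smul_mem' := fun a y hy x hx => by
    rw [hermInner_smul_right, hy x hx, mul_zero]

lemma mem_hermDualSub {hq1 : 0 < q} {hadd : ∀ x y : F, (x + y) ^ q = x ^ q + y ^ q}
    {W : Submodule F (ι → F)} {y : ι → F} :
    y ∈ hermDualSub hq1 hadd W ↔ ∀ x ∈ W, hermInner q x y = 0 := Iff.rfl

/-- Componentwise `q`-th power image of a submodule. -/
def conjSub (hq1 : 0 < q) (hadd : ∀ x y : F, (x + y) ^ q = x ^ q + y ^ q)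
    (hqq : ∀ x : F, (x ^ q) ^ q = x) (W : Submodule F (ι → F)) :
    Submodule F (ι → F) where
  carrier := (fun y : ι → F => fun i => y i ^ q) '' (W : Set (ι → F))
  add_mem' := by
    rintro _ _ ⟨y, hy, rfl⟩ ⟨z, hz, rfl⟩
    exact ⟨y + z, W.add_mem hy hz, by funext i; simp [hadd]⟩
  zero_mem' := ⟨0, W.zero_mem, by funext i; simp [zero_pow hq1.ne']⟩
  smul_mem' := by
    rintro a _ ⟨y, hy, rfl⟩
    refine ⟨a ^ q • y, W.smul_mem _ hy, ?_⟩
    funext i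
    simp [mul_pow, hqq a]

/-- The dot-product pairing as a linear map into the dual. -/
def dotL : (ι → F) →ₗ[F] Module.Dual F (ι → F) where
  toFun w :=
    { toFun := fun y => ∑ i, w i * y i
      map_add' := fun y z => by simp [mul_add, Finset.sum_add_distrib]
      map_smul' := fun a y => by simp [Finset.mul_sum, mul_left_comm] }
  map_add' w w' := by
    ext y; simp [add_mul, Finset.sum_add_distrib]
  map_smul' a w := by
    ext y; simp [Finset.mul_sum, mul_assoc]

lemma dotL_injective : Function.Injective (dotL (F := F) (ι := ι)) := by
  intro w w' h
  funext i
  have h2 := congrArg (fun f => f (Pi.single i (1 : F))) h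
  simpa [dotL, Pi.single_apply, mul_ite, Finset.sum_ite_eq'] using h2

lemma hermDualSub_eq (hq1 : 0 < q) (hadd : ∀ x y : F, (x + y) ^ q = x ^ q + y ^ q)
    (hqq : ∀ x : F, (x ^ q) ^ q = x) (W : Submodule F (ι → F)) :
    hermDualSub hq1 hadd W = ((conjSub hq1 hadd hqq W).map dotL).dualCoannihilator := by
  ext y
  rw [mem_hermDualSub, Submodule.mem_dualCoannihilator]
  constructor
  · rintro hy f hf
    obtain ⟨z, hz, rfl⟩ := Submodule.mem_map.mp hf
    obtain ⟨x, hx, rfl⟩ := hz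
    show (∑ i, x i ^ q * y i) = 0
    have h0 : hermInner q y x = 0 :=
      (hermInner_eq_zero_comm hq1 hadd hqq x y).mp (hy x hx)
    simpa [hermInner, mul_comm] using h0
  · intro hy x hx
    have h0 : dotL (fun i => x i ^ q) y = 0 :=
      hy _ (Submodule.mem_map.mpr ⟨_, ⟨x, hx, rfl⟩, rfl⟩)
    have h1 : hermInner q y x = 0 := by
      simpa [dotL, hermInner, mul_comm] using h0
    exact (hermInner_eq_zero_comm hq1 hadd hqq x y).mpr h1

lemma finrank_conjSub [Fintype F] (hq1 : 0 < q)
    (hadd : ∀ x y : F, (x + y) ^ q = x ^ q + y ^ q)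
    (hqq : ∀ x : F, (x ^ q) ^ q = x) (W : Submodule F (ι → F)) :
    finrank F (conjSub hq1 hadd hqq W) = finrank F W := by
  classical
  haveI : Fintype W := Fintype.ofFinite _
  haveI : Fintype (conjSub hq1 hadd hqq W) := Fintype.ofFinite _
  have e : W ≃ conjSub hq1 hadd hqq W := by
    refine Equiv.ofBijective (fun x => ⟨fun i => x.1 i ^ q, ⟨x.1, x.2, rfl⟩⟩) ⟨?_, ?_⟩
    · intro x x' h
      have h' := congrArg Subtype.val h
      ext i
      have h3 := congrFun h' i
      simp only at h3
      have := congrArg (· ^ q) h3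
      simp only [hqq] at this
      exact this
    · rintro ⟨_, x, hx, rfl⟩
      exact ⟨⟨x, hx⟩, rfl⟩
  have hcard := Fintype.card_congr e
  rw [card_eq_pow_finrank (K := F) (V := W),
    card_eq_pow_finrank (K := F) (V := conjSub hq1 hadd hqq W)] at hcard
  exact (Nat.pow_right_injective Fintype.one_lt_card hcard).symm

lemma finrank_hermDualSub [Fintype F] (hq1 : 0 < q)
    (hadd : ∀ x y : F, (x + y) ^ q = x ^ q + y ^ q)
    (hqq : ∀ x : F, (x ^ q) ^ q = x) (W : Submodule F (ι → F)) :
    finrank F W + finrank F (hermDualSub hq1 hadd W) = Fintype.card ι := by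
  rw [hermDualSub_eq hq1 hadd hqq W]
  have h1 := Subspace.finrank_add_finrank_dualCoannihilator_eq
    ((conjSub hq1 hadd hqq W).map dotL)
  have h2 : finrank F ((conjSub hq1 hadd hqq W).map dotL)
      = finrank F (conjSub hq1 hadd hqq W) :=
    (LinearEquiv.finrank_eq (Submodule.equivMapOfInjective dotL dotL_injective _)).symm
  rw [h2, finrank_conjSub hq1 hadd hqq W, Module.finrank_pi F] at h1
  exact h1

lemma hermExistsNormEq {F : Type} [Field F] [Fintype F] {q : ℕ} (hq2 : 2 ≤ q)
    (hF : Fintype.card F = q ^ 2) {c : F} (hc0 : c ≠ 0) (hcq : c ^ q = c) :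
    ∃ α : F, α ^ (q + 1) = c := by
  classical
  obtain ⟨g, hg⟩ := IsCyclic.exists_generator (α := Fˣ)
  have hc1 : c ^ (q - 1) = 1 := by
    have h : c ^ (q - 1) * c = 1 * c := by
      rw [← pow_succ, Nat.sub_add_cancel (by omega), hcq, one_mul]
    exact mul_right_cancel₀ hc0 h
  set cu : Fˣ := Units.mk0 c hc0 with hcu
  obtain ⟨k, hk⟩ := (Submonoid.mem_powers_iff cu g).mp
    (mem_powers_iff_mem_zpowers.mpr (hg cu))
  have hord : orderOf g = q ^ 2 - 1 := by
    rw [orderOf_eq_card_of_forall_mem_zpowers hg, Nat.card_eq_fintype_card, Fintype.card_units, hF]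
  have hcu1 : cu ^ (q - 1) = 1 := by
    ext
    push_cast
    exact hc1
  have hdvd : q ^ 2 - 1 ∣ k * (q - 1) := by
    rw [← hord]
    apply orderOf_dvd_of_pow_eq_one
    rw [pow_mul, hk, hcu1]
  have hfact : q ^ 2 - 1 = (q + 1) * (q - 1) := by
    simpa using Nat.sq_sub_sq q 1
  have hdvd2 : (q + 1) ∣ k := by
    rw [hfact] at hdvd
    exact (Nat.mul_dvd_mul_iff_right (show 0 < q - 1 by omega)).mp hdvd
  obtain ⟨t, rfl⟩ := hdvd2
  refine ⟨((g : Fˣ) : F) ^ t, ?_⟩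
  have h5 : (g ^ t) ^ (q + 1) = cu := by rw [← pow_mul, mul_comm, hk]
  calc (((g : Fˣ) : F) ^ t) ^ (q + 1) = (((g ^ t) ^ (q + 1) : Fˣ) : F) := by push_cast; ring
    _ = c := by rw [h5]; rfl

end HermAux

/-- Corollary 4 of the paper. If `C` is a Hermitian self-orthogonal
code of length `2n` and dimension `n - 1` over `F_{q²}`, then there exists a
Hermitian self-dual code `C'` of length `2n` (of dimension `n`) with
`C ⊆ C' ⊆ C^{⊥H}`. -/
theorem stmt19 (p m q n : ℕ) (hp : p.Prime) (hm : 0 < m) (hq : q = p ^ m)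
    (hn : 1 ≤ n)
    (F : Type) [Field F] [Fintype F] (hF : Fintype.card F = q ^ 2)
    (C : Submodule F (Fin (2 * n) → F))
    (hso : (C : Set (Fin (2 * n) → F)) ⊆ hermDual q (C : Set (Fin (2 * n) → F)))
    (hdim : Module.finrank F C = n - 1) :
    ∃ C' : Submodule F (Fin (2 * n) → F),
      (C' : Set (Fin (2 * n) → F)) = hermDual q (C' : Set (Fin (2 * n) → F)) ∧
      Module.finrank F C' = n ∧
      (C : Set (Fin (2 * n) → F)) ⊆ (C' : Set (Fin (2 * n) → F)) ∧
      (C' : Set (Fin (2 * n) → F)) ⊆ hermDual q (C : Set (Fin (2 * n) → F)) := by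
  classical
  have hq2 : 2 ≤ q := by
    rw [hq]
    calc 2 ≤ p := hp.two_le
      _ ≤ p ^ m := Nat.le_self_pow hm.ne' p
  have hq1 : 0 < q := by omega
  -- characteristic of F is p
  have hchar : CharP F p := by
    obtain ⟨r, hr⟩ := CharP.exists F
    haveI := hr
    obtain ⟨k, hrp, hcard⟩ := FiniteField.card F r
    have h1 : r ^ (k : ℕ) = p ^ (2 * m) := by
      rw [← hcard, hF, hq, ← pow_mul, mul_comm m 2]
    have hrdvd : r ∣ p ^ (2 * m) := h1 ▸ dvd_pow_self r (by positivity)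
    have : r = p := by
      have := hrp.dvd_of_dvd_pow hrdvd
      exact ((Nat.prime_dvd_prime_iff_eq hrp hp).mp this)
    exact this ▸ hr
  haveI := hchar
  haveI : Fact p.Prime := ⟨hp⟩
  have hadd : ∀ x y : F, (x + y) ^ q = x ^ q + y ^ q := fun x y => by
    rw [hq]; exact add_pow_char_pow x y p m
  have hqq : ∀ x : F, (x ^ q) ^ q = x := fun x => by
    rw [← pow_mul, ← pow_two q, ← hF, FiniteField.pow_card]
  -- the dual of C
  set D := hermDualSub hq1 hadd C with hD
  have hrankD : Module.finrank F C + Module.finrank F D = 2 * n := by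
    have := finrank_hermDualSub hq1 hadd hqq C
    rwa [Fintype.card_fin] at this
  have hDrank : Module.finrank F D = n + 1 := by omega
  have hCD : C ≤ D := fun x hx => hso hx
  -- rank of a sup with a new line
  have hrank_sup : ∀ (W : Submodule F (Fin (2 * n) → F)) (v : Fin (2 * n) → F),
      v ∉ W → Module.finrank F (W ⊔ Submodule.span F {v} : Submodule F _)
        = Module.finrank F W + 1 := by
    intro W v hv
    have hv0 : v ≠ 0 := fun h => hv (h ▸ W.zero_mem)
    have hinf : W ⊓ Submodule.span F {v} = ⊥ := by
      rw [eq_bot_iff]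
      intro x hx
      obtain ⟨hxW, hxv⟩ := Submodule.mem_inf.mp hx
      obtain ⟨a, rfl⟩ := Submodule.mem_span_singleton.mp hxv
      rcases eq_or_ne a 0 with rfl | ha
      · simp
      · exfalso
        apply hv
        have := W.smul_mem a⁻¹ hxW
        rwa [smul_smul, inv_mul_cancel₀ ha, one_smul] at this
    have h := Submodule.finrank_sup_add_finrank_inf_eq W (Submodule.span F {v})
    rw [hinf, finrank_span_singleton hv0] at h
    simpa using h
  -- pick u ∈ D \ C
  have hne : C ≠ D := fun h => by rw [← h] at hDrank; omega
  obtain ⟨u, huD, huC⟩ := SetLike.exists_of_lt (lt_of_le_of_ne hCD hne)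
  set C1 := C ⊔ Submodule.span F {u} with hC1
  have hC1rank : Module.finrank F C1 = n := by
    rw [hC1, hrank_sup C u huC, hdim]; omega
  have hC1D : C1 ≤ D := sup_le hCD
    ((Submodule.span_le).mpr (Set.singleton_subset_iff.mpr huD))
  have hne1 : C1 ≠ D := fun h => by rw [← h] at hDrank; omega
  obtain ⟨w, hwD, hwC1⟩ := SetLike.exists_of_lt (lt_of_le_of_ne hC1D hne1)
  have huC1 : u ∈ C1 := Submodule.mem_sup_right (Submodule.mem_span_singleton_self u)
  -- find an isotropic vector outside C
  obtain ⟨v, hvD, hvC, hvv⟩ : ∃ v, v ∈ D ∧ v ∉ C ∧ hermInner q v v = 0 := by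
    by_cases ha : hermInner q u u = 0
    · exact ⟨u, huD, huC, ha⟩
    · set lam := (hermInner q u w * (hermInner q u u)⁻¹) ^ q with hlam
      set w' := w - lam • u with hw'
      have hw'D : w' ∈ D := D.sub_mem hwD (D.smul_mem _ huD)
      have hw'C1 : w' ∉ C1 := fun h => hwC1 (by
        have hwe : w = w' + lam • u := by rw [hw']; abel
        rw [hwe]
        exact C1.add_mem h (C1.smul_mem _ huC1))
      have huw' : hermInner q u w' = 0 := by
        rw [hw', hermInner_sub_right hq1 hadd, hermInner_smul_right, hlam, hqq]
        field_simp
        ring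
      have hw'u : hermInner q w' u = 0 :=
        (hermInner_eq_zero_comm hq1 hadd hqq u w').mp huw'
      by_cases hd' : hermInner q w' w' = 0
      · exact ⟨w', hw'D, fun h => hw'C1 (Submodule.mem_sup_left h), hd'⟩
      · have haq : (hermInner q u u) ^ q = hermInner q u u :=
          hermInner_conj hq1 hadd hqq u u
        have hdq : (hermInner q w' w') ^ q = hermInner q w' w' :=
          hermInner_conj hq1 hadd hqq w' w'
        set c := -(hermInner q w' w' * (hermInner q u u)⁻¹) with hc
        have hc0 : c ≠ 0 := by
          rw [hc, neg_ne_zero]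
          exact mul_ne_zero hd' (inv_ne_zero ha)
        have hcq : c ^ q = c := by
          rw [hc, pow_q_neg hq1 hadd, mul_pow, inv_pow, haq, hdq]
        obtain ⟨α, hα⟩ := hermExistsNormEq hq2 hF hc0 hcq
        refine ⟨α • u + w', D.add_mem (D.smul_mem α huD) hw'D, ?_, ?_⟩
        · intro h
          apply hw'C1
          have hwe : w' = (α • u + w') - α • u := by abel
          rw [hwe]
          exact C1.sub_mem (Submodule.mem_sup_left h) (C1.smul_mem _ huC1)
        · rw [hermInner_add_left, hermInner_add_right hq1 hadd,
            hermInner_add_right hq1 hadd, hermInner_smul_left, hermInner_smul_left,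
            hermInner_smul_right, hermInner_smul_right, huw', hw'u]
          have hmain : α * (α ^ q * hermInner q u u) = -(hermInner q w' w') := by
            rw [← mul_assoc, ← pow_succ' α q, hα, hc]
            field_simp
          rw [hmain]
          ring
  -- the self-dual code
  set C' := C ⊔ Submodule.span F {v} with hC'
  have hvC' : v ∈ C' := Submodule.mem_sup_right (Submodule.mem_span_singleton_self v)
  have hC'rank : Module.finrank F C' = n := by
    rw [hC', hrank_sup C v hvC, hdim]; omega
  have hCv : ∀ x ∈ C, hermInner q x v = 0 := fun x hx => hvD x hx
  have hvCz : ∀ x ∈ C, hermInner q v x = 0 := fun x hx =>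
    (hermInner_eq_zero_comm hq1 hadd hqq x v).mp (hvD x hx)
  have hso' : ∀ y ∈ C', ∀ x ∈ C', hermInner q x y = 0 := by
    intro y hy x hx
    obtain ⟨c₁, hc₁, x₂, hx₂, rfl⟩ := Submodule.mem_sup.mp hx
    obtain ⟨c₂, hc₂, y₂, hy₂, rfl⟩ := Submodule.mem_sup.mp hy
    obtain ⟨β₁, rfl⟩ := Submodule.mem_span_singleton.mp hx₂
    obtain ⟨β₂, rfl⟩ := Submodule.mem_span_singleton.mp hy₂
    rw [hermInner_add_left, hermInner_add_right hq1 hadd, hermInner_add_right hq1 hadd,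
      hermInner_smul_left, hermInner_smul_left, hermInner_smul_right, hermInner_smul_right,
      hso hc₂ c₁ hc₁, hCv c₁ hc₁, hvCz c₂ hc₂, hvv]
    ring
  have hle : C' ≤ hermDualSub hq1 hadd C' := fun y hy x hx => hso' y hy x hx
  have hrk : Module.finrank F C' + Module.finrank F (hermDualSub hq1 hadd C') = 2 * n := by
    have := finrank_hermDualSub hq1 hadd hqq C'
    rwa [Fintype.card_fin] at this
  have heq : C' = hermDualSub hq1 hadd C' :=
    Submodule.eq_of_le_of_finrank_eq hle (by omega)
  refine ⟨C', ?_, hC'rank, fun x hx => Submodule.mem_sup_left hx, ?_⟩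
  · conv_lhs => rw [heq]
    rfl
  · intro y hy x hx
    exact hso' y (by exact hy) x (Submodule.mem_sup_left hx)
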